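/- For the function φ(z) = 1 + z − z³/3, the minimum of Re φ(z) over |z| = r equals 1 − r + r³/3 when r ≤ 1/√3, and the limit as r → 1⁻ of min_{|z|=r} Re φ(z) equals 1 − (2√2)/3, where min_{|z|=r} Re φ(z) = 1 − (1/3)(1+r²)^{3/2} for r ≥ 1/√3. -/

import Mathlib

lemma re_phi_mk (x y : ℝ) :
    ((1 : ℂ) + Complex.mk x y - (Complex.mk x y) ^ 3 / 3).re
      = 1 + x - (x ^ 3 - 3 * x * y ^ 2) / 3 := by
  simp [pow_succ, Complex.mul_re, Complex.div_re, Complex.normSq]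
  ring

lemma norm_mk_of (x y r : ℝ) (hr : 0 ≤ r) (h : x ^ 2 + y ^ 2 = r ^ 2) :
    ‖Complex.mk x y‖ = r := by
  rw [Complex.norm_def, Complex.normSq_mk,
    show x * x + y * y = r ^ 2 by nlinarith, Real.sqrt_sq hr]

lemma re_phi_of_norm (z : ℂ) (r : ℝ) (h : ‖z‖ = r) :
    (1 + z - z ^ 3 / 3).re = 1 + z.re * (1 + r ^ 2) - 4 / 3 * z.re ^ 3 := by
  have h2 : z.re ^ 2 + z.im ^ 2 = r ^ 2 := by
    have := Complex.sq_norm z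
    rw [Complex.normSq_apply] at this
    rw [← h]; nlinarith
  have hz : z = Complex.mk z.re z.im := rfl
  conv_lhs => rw [hz]
  rw [re_phi_mk]
  linear_combination z.re * h2

/-- For `φ(z) = 1 + z − z³/3`: the minimum of `Re φ(z)` over `|z| = r` equals
`1 − r + r³/3` for `0 < r ≤ 1/√3`, equals `1 − (1/3)(1+r²)^{3/2}` for
`1/√3 ≤ r < 1`, and the latter tends to `1 − 2√2/3` as `r → 1⁻`. -/
theorem nephroid_min_re :
    (∀ r : ℝ, 0 < r → r ≤ 1 / Real.sqrt 3 →
      IsLeast {x : ℝ | ∃ z : ℂ, ‖z‖ = r ∧ x = (1 + z - z ^ 3 / 3).re}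
        (1 - r + r ^ 3 / 3)) ∧
    (∀ r : ℝ, 1 / Real.sqrt 3 ≤ r → r < 1 →
      IsLeast {x : ℝ | ∃ z : ℂ, ‖z‖ = r ∧ x = (1 + z - z ^ 3 / 3).re}
        (1 - (1 / 3) * (1 + r ^ 2) ^ ((3 : ℝ) / 2))) ∧
    Filter.Tendsto (fun r : ℝ => 1 - (1 / 3) * (1 + r ^ 2) ^ ((3 : ℝ) / 2))
      (nhdsWithin 1 (Set.Iio 1)) (nhds (1 - 2 * Real.sqrt 2 / 3)) := by
  have s3 : Real.sqrt 3 > 0 := Real.sqrt_pos.2 (by norm_num)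
  have s3sq : Real.sqrt 3 ^ 2 = 3 := Real.sq_sqrt (by norm_num)
  refine ⟨?_, ?_, ?_⟩
  · intro r hr hr2
    have hr2' : r * Real.sqrt 3 ≤ 1 := by
      rw [le_div_iff₀ s3] at hr2; exact hr2
    have hr3 : 3 * r ^ 2 ≤ 1 := by nlinarith
    constructor
    · exact ⟨Complex.mk (-r) 0, norm_mk_of _ _ _ hr.le (by ring),
        by rw [re_phi_mk]; ring⟩
    · rintro v ⟨z, hz, rfl⟩
      rw [re_phi_of_norm z r hz]
      have hx : z.re ^ 2 ≤ r ^ 2 := by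
        have := Complex.abs_re_le_norm z
        rw [hz] at this
        nlinarith [le_abs_self z.re, neg_abs_le z.re]
      have hxr : -r ≤ z.re := by nlinarith [sq_nonneg (z.re + r)]
      have hmxr : -(z.re * r) ≤ r ^ 2 := by nlinarith
      have hfac : 0 ≤ (1 + r ^ 2) - 4 / 3 * (z.re ^ 2 - z.re * r + r ^ 2) := by
        nlinarith
      nlinarith [mul_nonneg (by linarith : (0:ℝ) ≤ z.re + r) hfac]
  · intro r hr hr1
    have hr0 : 0 < r := lt_of_lt_of_le (by positivity) hr
    have hr' : 1 ≤ r * Real.sqrt 3 := by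
      rw [div_le_iff₀ s3] at hr; exact hr
    have hr3 : 1 ≤ 3 * r ^ 2 := by nlinarith
    set s : ℝ := Real.sqrt (1 + r ^ 2) with hs
    have hs0 : 0 < s := Real.sqrt_pos.2 (by positivity)
    have hs2 : s ^ 2 = 1 + r ^ 2 := Real.sq_sqrt (by positivity)
    set c : ℝ := s / 2 with hc
    have h4c : 4 * c ^ 2 = 1 + r ^ 2 := by rw [hc, div_pow, hs2]; ring
    have hc0 : 0 < c := by positivity
    have hcr : c ≤ r := by nlinarith
    have hpow : (1 + r ^ 2) ^ ((3 : ℝ) / 2) = 8 * c ^ 3 := by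
      have h1 : (1 + r ^ 2) ^ ((3 : ℝ) / 2) = s ^ (3 : ℕ) := by
        rw [show ((3:ℝ)/2) = (1/2) * ((3:ℕ):ℝ) by push_cast; ring,
          Real.rpow_mul (by positivity), Real.rpow_natCast]
        congr 1
        rw [← Real.sqrt_eq_rpow]
      rw [h1, hc]; ring
    rw [hpow]
    constructor
    · have hy2 : 0 ≤ r ^ 2 - c ^ 2 := by nlinarith
      refine ⟨Complex.mk (-c) (Real.sqrt (r ^ 2 - c ^ 2)),
        norm_mk_of _ _ _ hr0.le (by rw [Real.sq_sqrt hy2]; ring), ?_⟩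
      rw [re_phi_mk, Real.sq_sqrt hy2]
      linear_combination (-c) * h4c
    · rintro v ⟨z, hz, rfl⟩
      rw [re_phi_of_norm z r hz]
      have hx : z.re ^ 2 ≤ r ^ 2 := by
        have := Complex.abs_re_le_norm z
        rw [hz] at this
        nlinarith [le_abs_self z.re, neg_abs_le z.re]
      have hxu : z.re ≤ r := by nlinarith [sq_nonneg (z.re - r)]
      have h2c : z.re ≤ 2 * c := by nlinarith
      have expand : 1 + z.re * (1 + r ^ 2) - 4 / 3 * z.re ^ 3
          - (1 - 1 / 3 * (8 * c ^ 3))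
          = 4 / 3 * (z.re + c) ^ 2 * (2 * c - z.re) := by
        linear_combination (-z.re) * hs2
      nlinarith [mul_nonneg (mul_nonneg (by norm_num : (0:ℝ) ≤ 4/3)
        (sq_nonneg (z.re + c))) (by linarith : (0:ℝ) ≤ 2 * c - z.re)]
  · have hcont : ContinuousAt (fun r : ℝ => 1 - (1 / 3) * (1 + r ^ 2) ^ ((3 : ℝ) / 2)) 1 := by
      apply continuousAt_const.sub
      apply continuousAt_const.mul
      exact (Real.continuousAt_rpow_const _ _ (Or.inr (by norm_num))).comp
        (by fun_prop)
    have hval : (1 : ℝ) - (1 / 3) * (1 + (1:ℝ) ^ 2) ^ ((3 : ℝ) / 2)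
        = 1 - 2 * Real.sqrt 2 / 3 := by
      have h2 : ((2:ℝ)) ^ ((3:ℝ)/2) = 2 * Real.sqrt 2 := by
        rw [show ((3:ℝ)/2) = 1 + 1/2 by ring, Real.rpow_add (by norm_num),
          Real.rpow_one, ← Real.sqrt_eq_rpow]
      rw [show (1:ℝ) + 1 ^ 2 = 2 by norm_num, h2]; ring
    have ht := hcont.tendsto
    rw [hval] at ht
    exact ht.mono_left nhdsWithin_le_nhds
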